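/- Let B ≤ A be finite abelian groups, and set G = {α ∈ Aut(A) : α(b) = b for all b ∈ B, and α(a)·a⁻¹ ∈ B for all a ∈ A}. Then G is an abelian subgroup of Aut(A), and the exponent of G equals gcd(exp(B), exp(A/B)). -/

import Mathlib

private lemma pow_dvd_nat_lcm {p k a b : ℕ} (hp : p.Prime) (h : p ^ k ∣ Nat.lcm a b) :
    p ^ k ∣ a ∨ p ^ k ∣ b := by
  rcases eq_or_ne a 0 with rfl | ha
  · exact Or.inl (dvd_zero _)
  rcases eq_or_ne b 0 with rfl | hb
  · exact Or.inr (dvd_zero _)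
  have hlcm : Nat.lcm a b ≠ 0 := Nat.lcm_ne_zero ha hb
  rw [Nat.Prime.pow_dvd_iff_le_factorization hp hlcm, Nat.factorization_lcm ha hb,
    Finsupp.sup_apply, le_sup_iff] at h
  exact h.imp (fun h => (Nat.Prime.pow_dvd_iff_le_factorization hp ha).2 h)
    (fun h => (Nat.Prime.pow_dvd_iff_le_factorization hp hb).2 h)

private lemma pow_dvd_finset_lcm {ι : Type*} {s : Finset ι} {f : ι → ℕ} {p k : ℕ}
    (hp : p.Prime) (hk : k ≠ 0) (h : p ^ k ∣ s.lcm f) : ∃ i ∈ s, p ^ k ∣ f i := by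
  classical
  induction s using Finset.induction_on with
  | empty =>
    rw [Finset.lcm_empty, Nat.dvd_one, pow_eq_one_iff_left hk] at h
    exact absurd h hp.one_lt.ne'
  | insert _ _ hx ih =>
    rename_i a s
    rw [Finset.lcm_insert, lcm_eq_nat_lcm] at h
    rcases pow_dvd_nat_lcm hp h with h | h
    · exact ⟨a, Finset.mem_insert_self a s, h⟩
    · obtain ⟨i, hi, hdvd⟩ := ih h
      exact ⟨i, Finset.mem_insert_of_mem hi, hdvd⟩

private lemma exists_surjective_zmod_hom (C : Type*) [CommGroup C] [Finite C] {p k : ℕ}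
    (hp : p.Prime) (hk : k ≠ 0) (h : p ^ k ∣ Monoid.exponent C) :
    ∃ χ : C →* Multiplicative (ZMod (p ^ k)), Function.Surjective χ := by
  obtain ⟨ι, hι, n, h1, ⟨e⟩⟩ := CommGroup.equiv_prod_multiplicative_zmod_of_finite C
  have hexp : Monoid.exponent C = Finset.univ.lcm n := by
    rw [Monoid.exponent_eq_of_mulEquiv e, Monoid.exponent_pi]
    congr 1
    funext i
    rw [Monoid.exponent_multiplicative, ZMod.exponent]
  rw [hexp] at h
  obtain ⟨i, -, hi⟩ := pow_dvd_finset_lcm hp hk h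
  classical
  haveI : NeZero (p ^ k) := ⟨pow_ne_zero _ hp.pos.ne'⟩
  let c : ZMod (n i) →+ ZMod (p ^ k) := (ZMod.castHom hi (ZMod (p ^ k))).toAddMonoidHom
  have hc : Function.Surjective c := by
    intro y
    obtain ⟨m, rfl⟩ := ZMod.natCast_zmod_surjective y
    exact ⟨(m : ZMod (n i)), map_natCast (ZMod.castHom hi (ZMod (p ^ k))) m⟩
  refine ⟨(AddMonoidHom.toMultiplicative c).comp
    ((Pi.evalMonoidHom (fun j => Multiplicative (ZMod (n j))) i).comp e.toMonoidHom),
    fun y => ?_⟩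
  obtain ⟨x, hx⟩ := hc y.toAdd
  obtain ⟨g, hg⟩ := e.surjective (Function.update 1 i (Multiplicative.ofAdd x))
  refine ⟨g, ?_⟩
  show AddMonoidHom.toMultiplicative c (e g i) = y
  rw [hg, Function.update_self]
  exact (congrArg Multiplicative.ofAdd hx).trans (ofAdd_toAdd y)

private lemma exists_orderOf_eq' {C : Type*} [CommGroup C] [Finite C] {d : ℕ}
    (hd : d ∣ Monoid.exponent C) : ∃ c : C, orderOf c = d := by
  obtain ⟨c, hc⟩ := Monoid.exists_orderOf_eq_exponent (Monoid.ExponentExists.of_finite (G := C))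
  exact ⟨c ^ (orderOf c / d), orderOf_pow_orderOf_div
    (by rw [hc]; exact Monoid.exponent_ne_zero_of_finite) (hc ▸ hd)⟩

/-- For a subgroup `B` of an abelian group `A`, the group of automorphisms of `A` that
fix `B` pointwise and induce the identity on `A ⧸ B`. -/
def relAutSubgroup {A : Type*} [CommGroup A] (B : Subgroup A) : Subgroup (MulAut A) where
  carrier := {α | (∀ b ∈ B, α b = b) ∧ ∀ a : A, α a * a⁻¹ ∈ B}
  one_mem' := ⟨fun _ _ => rfl, fun a => by simpa using B.one_mem⟩
  mul_mem' := by
    rintro α β ⟨hα1, hα2⟩ ⟨hβ1, hβ2⟩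
    constructor
    · intro b hb
      rw [MulAut.mul_apply, hβ1 b hb, hα1 b hb]
    · intro a
      have h : (α * β) a * a⁻¹ = α (β a) * (β a)⁻¹ * (β a * a⁻¹) := by
        rw [MulAut.mul_apply]; group
      rw [h]
      exact mul_mem (hα2 (β a)) (hβ2 a)
  inv_mem' := by
    rintro α ⟨h1, h2⟩
    constructor
    · intro b hb
      conv_lhs => rw [← h1 b hb]
      exact MulAut.inv_apply_self A α b
    · intro a
      have h := inv_mem (h2 (α⁻¹ a))
      rw [MulAut.apply_inv_self] at h
      simpa [mul_inv_rev] using h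


private lemma relAut_pow_apply {A : Type*} [CommGroup A] {B : Subgroup A} {α : MulAut A}
    (hα : α ∈ relAutSubgroup B) (n : ℕ) (a : A) :
    (α ^ n) a = a * (α a * a⁻¹) ^ n := by
  induction n with
  | zero => simp
  | succ n ih =>
    have ht : (α a * a⁻¹) ^ n ∈ B := pow_mem (hα.2 a) n
    have key : a * (α a * a⁻¹) = α a := by
      rw [mul_comm (α a) a⁻¹, ← mul_assoc, mul_inv_cancel, one_mul]
    rw [pow_succ', MulAut.mul_apply, ih, map_mul, hα.1 _ ht, pow_succ', ← mul_assoc, key]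

/-- Let `B ≤ A` be finite abelian groups and let
`G = {α ∈ Aut A | α` fixes `B` pointwise and `α a * a⁻¹ ∈ B` for all `a}`.
Then `G` is abelian, and `exp G = gcd (exp B) (exp (A ⧸ B))`. -/
theorem relAutSubgroup_commutative_and_exponent
    {A : Type*} [CommGroup A] [Finite A] (B : Subgroup A) :
    (∀ α ∈ relAutSubgroup B, ∀ β ∈ relAutSubgroup B, α * β = β * α) ∧
    Monoid.exponent (relAutSubgroup B) =
      Nat.gcd (Monoid.exponent B) (Monoid.exponent (A ⧸ B)) := by
  constructor
  · intro α hα β hβ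
    ext a
    show α (β a) = β (α a)
    have h1 : α (β a) = β a * a⁻¹ * α a := by
      conv_lhs => rw [show β a = β a * a⁻¹ * a by group]
      rw [map_mul, hα.1 _ (hβ.2 a)]
    have h2 : β (α a) = α a * a⁻¹ * β a := by
      conv_lhs => rw [show α a = α a * a⁻¹ * a by group]
      rw [map_mul, hβ.1 _ (hα.2 a)]
    rw [h1, h2]
    simp [mul_comm, mul_left_comm, mul_assoc]
  · refine Nat.dvd_antisymm (Nat.dvd_gcd ?_ ?_) ?_
    · refine Monoid.exponent_dvd_of_forall_pow_eq_one fun x => ?_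
      have hx := x.2
      apply Subtype.ext
      rw [SubmonoidClass.coe_pow, OneMemClass.coe_one]
      ext a
      rw [relAut_pow_apply hx, MulAut.one_apply]
      have ht : (x : MulAut A) a * a⁻¹ ∈ B := hx.2 a
      have h1 : (⟨_, ht⟩ : B) ^ Monoid.exponent B = 1 := Monoid.pow_exponent_eq_one _
      have h2 : ((x : MulAut A) a * a⁻¹) ^ Monoid.exponent B = 1 := by
        simpa [Subtype.ext_iff] using h1
      rw [h2, mul_one]
    · refine Monoid.exponent_dvd_of_forall_pow_eq_one fun x => ?_
      have hx := x.2
      apply Subtype.ext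
      rw [SubmonoidClass.coe_pow, OneMemClass.coe_one]
      ext a
      rw [relAut_pow_apply hx, MulAut.one_apply]
      set m := Monoid.exponent (A ⧸ B) with hm
      have ham : a ^ m ∈ B := by
        rw [← QuotientGroup.eq_one_iff]
        simpa using Monoid.pow_exponent_eq_one ((a : A ⧸ B))
      have h3 : ((x : MulAut A) a * a⁻¹) ^ m = (x : MulAut A) (a ^ m) * (a ^ m)⁻¹ := by
        rw [mul_pow, map_pow, inv_pow]
      rw [h3, hx.1 _ ham, mul_inv_cancel, mul_one]
    · set g := Nat.gcd (Monoid.exponent B) (Monoid.exponent (A ⧸ B)) with hgdef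
      have hBne : Monoid.exponent B ≠ 0 := Monoid.exponent_ne_zero_of_finite
      have hg : g ≠ 0 := Nat.gcd_ne_zero_left hBne
      have hGne : Monoid.exponent (relAutSubgroup B) ≠ 0 := Monoid.exponent_ne_zero_of_finite
      rw [← Nat.factorization_le_iff_dvd hg hGne, Finsupp.le_def]
      intro p
      by_cases hp : p.Prime
      swap
      · simp [Nat.factorization_eq_zero_of_not_prime _ hp]
      set k := g.factorization p with hkdef
      rcases eq_or_ne k 0 with hk0 | hk0
      · simp [hk0]
      have hpk : p ^ k ∣ g := Nat.ordProj_dvd g p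
      rw [← Nat.Prime.pow_dvd_iff_le_factorization hp hGne]
      obtain ⟨b, hb⟩ := exists_orderOf_eq' (C := B) (dvd_trans hpk (Nat.gcd_dvd_left _ _))
      obtain ⟨χ, hχ⟩ := exists_surjective_zmod_hom (A ⧸ B) hp hk0
        (dvd_trans hpk (Nat.gcd_dvd_right _ _))
      haveI : NeZero (p ^ k) := ⟨pow_ne_zero _ hp.pos.ne'⟩
      have hbz : zmultiplesHom (Additive B) (Additive.ofMul b) ((p ^ k : ℕ) : ℤ) = 0 := by
        rw [zmultiplesHom_apply, ← hb]
        have : (Additive.toMul (((orderOf b : ℕ) : ℤ) • Additive.ofMul b)) = 1 := by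
          rw [toMul_zsmul]
          simp [zpow_natCast, pow_orderOf_eq_one]
        simp [← ofMul_pow, pow_orderOf_eq_one]
      set φ : ZMod (p ^ k) →+ Additive B :=
        ZMod.lift _ ⟨zmultiplesHom (Additive B) (Additive.ofMul b), hbz⟩ with hφdef
      set ψ : Multiplicative (ZMod (p ^ k)) →* B := AddMonoidHom.toMultiplicativeLeft φ with hψdef
      have hψ1 : ψ (Multiplicative.ofAdd 1) = b := by
        show Additive.toMul (φ (1 : ZMod (p ^ k))) = b
        have h1 : ((1 : ℤ) : ZMod (p ^ k)) = 1 := by push_cast; rfl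
        rw [hφdef, ← h1, ZMod.lift_coe]
        simp [zmultiplesHom_apply]
      set f'' : A →* B := (ψ.comp χ).comp (QuotientGroup.mk' B) with hf''def
      set F : A →* A :=
        { toFun := fun a => a * (f'' a : A)
          map_one' := by simp
          map_mul' := fun x y => by
            show x * y * ((f'' (x * y) : A)) = x * (f'' x : A) * (y * (f'' y : A))
            rw [map_mul, MulMemClass.coe_mul, mul_mul_mul_comm] } with hFdef
      have hFapp : ∀ a : A, F a = a * (f'' a : A) := fun _ => rfl
      have hFinj : Function.Injective F := by
        intro x y hxy
        rw [hFapp, hFapp] at hxy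
        have hmk : f'' x = f'' y := by
          have h2 : x⁻¹ * (y * (f'' y : A)) = (f'' x : A) := by
            rw [← hxy]; group
          have h3 : x⁻¹ * y = (f'' x : A) * ((f'' y : A))⁻¹ := by
            rw [← h2]; group
          have hmem : x⁻¹ * y ∈ B := by
            rw [h3]
            exact mul_mem (SetLike.coe_mem _) (inv_mem (SetLike.coe_mem _))
          have : (QuotientGroup.mk' B) x = (QuotientGroup.mk' B) y := by
            apply QuotientGroup.eq.mpr hmem
          rw [hf''def]
          simp only [MonoidHom.comp_apply, this]
        rw [hmk] at hxy
        exact mul_right_cancel hxy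
      have hFbij := Finite.injective_iff_bijective.mp hFinj
      set α : MulAut A := MulEquiv.ofBijective F hFbij with hαdef
      have hαapp : ∀ a : A, α a = a * (f'' a : A) := fun _ => rfl
      have hmem : α ∈ relAutSubgroup B := by
        constructor
        · intro b' hb'
          have : (QuotientGroup.mk' B) b' = 1 := (QuotientGroup.eq_one_iff b').mpr hb'
          rw [hαapp, hf''def]
          simp only [MonoidHom.comp_apply, this, map_one, OneMemClass.coe_one, mul_one]
        · intro a
          rw [hαapp]
          have h4 : a * (f'' a : A) * a⁻¹ = (f'' a : A) := by
            rw [mul_right_comm, mul_inv_cancel, one_mul]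
          rw [h4]
          exact SetLike.coe_mem _
      set x : relAutSubgroup B := ⟨α, hmem⟩ with hxdef
      have hfa : ∀ a : A, α a * a⁻¹ = (f'' a : A) := by
        intro a; rw [hαapp, mul_right_comm, mul_inv_cancel, one_mul]
      have hxpow : ∀ n : ℕ, x ^ n = 1 ↔ p ^ k ∣ n := by
        intro n
        rw [Subtype.ext_iff, SubmonoidClass.coe_pow, OneMemClass.coe_one]
        constructor
        · intro h
          obtain ⟨q, hq⟩ := hχ (Multiplicative.ofAdd (1 : ZMod (p ^ k)))
          obtain ⟨a, rfl⟩ := QuotientGroup.mk'_surjective B q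
          have h6 := congrArg (fun e : MulAut A => e a) h
          simp only [MulAut.one_apply] at h6
          rw [relAut_pow_apply hmem n a] at h6
          have h5 : (α a * a⁻¹) ^ n = 1 := mul_eq_left.mp h6
          rw [hfa] at h5
          have hbn : b ^ n = 1 := by
            apply Subtype.ext
            rw [SubmonoidClass.coe_pow, OneMemClass.coe_one]
            have : f'' a = b := by
              rw [hf''def]
              simp only [MonoidHom.comp_apply]
              rw [hq, hψ1]
            rw [← this]
            exact h5
          rw [← hb]
          exact orderOf_dvd_of_pow_eq_one hbn
        · intro hdvd
          ext a
          rw [relAut_pow_apply hmem n a, MulAut.one_apply, hfa]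
          have hz : (χ ((QuotientGroup.mk' B) a)) ^ n = 1 := by
            obtain ⟨m', rfl⟩ := hdvd
            rw [pow_mul]
            have hcard : (χ ((QuotientGroup.mk' B) a)) ^ (p ^ k) = 1 := by
              have hc := pow_card_eq_one' (G := Multiplicative (ZMod (p ^ k)))
                (x := χ ((QuotientGroup.mk' B) a))
              rwa [show Nat.card (Multiplicative (ZMod (p ^ k))) = p ^ k from Nat.card_zmod _]
                at hc
            rw [hcard, one_pow]
          have h7 : (f'' a) ^ n = 1 := by
            rw [hf''def]
            simp only [MonoidHom.comp_apply]
            rw [← map_pow, hz, map_one]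
          have h8 : ((f'' a : A)) ^ n = 1 := by
            have := congrArg (fun t : B => (t : A)) h7
            simpa using this
          rw [h8, mul_one]
      have hord : orderOf x = p ^ k :=
        Nat.dvd_antisymm (orderOf_dvd_of_pow_eq_one ((hxpow _).mpr dvd_rfl))
          ((hxpow _).mp (pow_orderOf_eq_one x))
      rw [← hord]
      exact Monoid.order_dvd_exponent x
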